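/- Let P ∈ F_q[t; σ] be a twisted polynomial. Then P has a linear (degree-one) right divisor if and only if P has a linear left divisor. -/

import Mathlib

open Polynomial Finset

/-- Multiplication in the twisted polynomial ring `F_q[t; σ]`, with the rule
`t·a = σ(a)·t`, represented on the coefficient data of ordinary polynomials. -/
noncomputable def skewMul {F : Type*} [Field F] (σ : F → F) (P Q : Polynomial F) :
    Polynomial F :=
  ∑ i ∈ P.support, ∑ j ∈ Q.support,
    Polynomial.C (P.coeff i * σ^[i] (Q.coeff j)) * Polynomial.X ^ (i + j)

namespace Stmt6Aux

variable {F : Type*} [Field F]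

/-! ### iterate helpers -/

lemma it_zero (f : F ≃+* F) (j : ℕ) : (⇑f)^[j] 0 = 0 := by
  induction j with
  | zero => rfl
  | succ j ih => rw [Function.iterate_succ_apply', ih, map_zero]

lemma it_one (f : F ≃+* F) (j : ℕ) : (⇑f)^[j] 1 = 1 := by
  induction j with
  | zero => rfl
  | succ j ih => rw [Function.iterate_succ_apply', ih, map_one]

lemma it_add (f : F ≃+* F) (j : ℕ) (x y : F) :
    (⇑f)^[j] (x + y) = (⇑f)^[j] x + (⇑f)^[j] y := by
  induction j with
  | zero => rfl
  | succ j ih => rw [Function.iterate_succ_apply', Function.iterate_succ_apply',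
      Function.iterate_succ_apply', ih, map_add]

lemma it_mul (f : F ≃+* F) (j : ℕ) (x y : F) :
    (⇑f)^[j] (x * y) = (⇑f)^[j] x * (⇑f)^[j] y := by
  induction j with
  | zero => rfl
  | succ j ih => rw [Function.iterate_succ_apply', Function.iterate_succ_apply',
      Function.iterate_succ_apply', ih, map_mul]

lemma it_neg (f : F ≃+* F) (j : ℕ) (x : F) : (⇑f)^[j] (-x) = -(⇑f)^[j] x := by
  induction j with
  | zero => rfl
  | succ j ih => rw [Function.iterate_succ_apply', Function.iterate_succ_apply', ih, map_neg]

lemma it_inv (f : F ≃+* F) (j : ℕ) (x : F) : (⇑f)^[j] x⁻¹ = ((⇑f)^[j] x)⁻¹ := by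
  induction j with
  | zero => rfl
  | succ j ih => rw [Function.iterate_succ_apply', Function.iterate_succ_apply', ih, map_inv₀]

lemma it_eq_zero_iff (f : F ≃+* F) (j : ℕ) (x : F) : (⇑f)^[j] x = 0 ↔ x = 0 := by
  induction j with
  | zero => rfl
  | succ j ih =>
    rw [Function.iterate_succ_apply', map_eq_zero_iff _ f.injective, ih]

lemma it_symm_cancel (f : F ≃+* F) (j : ℕ) : ∀ x : F,
    (⇑f)^[j] ((⇑f.symm)^[j] x) = x := by
  induction j with
  | zero => exact fun x => rfl
  | succ j ih =>
    intro x
    rw [Function.iterate_succ_apply', Function.iterate_succ_apply, ih (f.symm x),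
      RingEquiv.apply_symm_apply]

/-- `(⇑f)^[j]` as an additive monoid hom. -/
def itHom (f : F ≃+* F) (j : ℕ) : F →+ F where
  toFun := (⇑f)^[j]
  map_zero' := it_zero f j
  map_add' := it_add f j

@[simp] lemma itHom_apply (f : F ≃+* F) (j : ℕ) (x : F) : itHom f j x = (⇑f)^[j] x := rfl

lemma it_sum (f : F ≃+* F) (j : ℕ) {ι : Type*} (t : Finset ι) (g : ι → F) :
    (⇑f)^[j] (∑ i ∈ t, g i) = ∑ i ∈ t, (⇑f)^[j] (g i) :=
  map_sum (itHom f j) g t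

end Stmt6Aux

namespace Stmt6Aux

variable {F : Type*} [Field F]

lemma it_cancel (f : F ≃+* F) (j : ℕ) (x : F) :
    (⇑f.symm)^[j] ((⇑f)^[j] x) = x := by
  have := it_symm_cancel f.symm j (x := x)
  rwa [RingEquiv.symm_symm] at this

/-! ### the norm-like products and remainder maps -/

variable (e : F ≃+* F)

/-- `Nn e b i = σ^{i-1}(b) ⋯ σ(b) b`. -/
noncomputable def Nn (b : F) (i : ℕ) : F := ∏ j ∈ Finset.range i, (⇑e)^[j] b

/-- `Mm e b i = b σ^{-1}(b) ⋯ σ^{-(i-1)}(b)`. -/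
noncomputable def Mm (b : F) (i : ℕ) : F := ∏ j ∈ Finset.range i, (⇑e.symm)^[j] b

@[simp] lemma Nn_zero (b : F) : Nn e b 0 = 1 := rfl
@[simp] lemma Mm_zero (b : F) : Mm e b 0 = 1 := rfl

lemma Nn_succ (b : F) (i : ℕ) : Nn e b (i + 1) = Nn e b i * (⇑e)^[i] b :=
  Finset.prod_range_succ _ _

lemma Mm_succ (b : F) (i : ℕ) : Mm e b (i + 1) = Mm e b i * (⇑e.symm)^[i] b :=
  Finset.prod_range_succ _ _

lemma Nn_succ' (b : F) (i : ℕ) : Nn e b (i + 1) = e (Nn e b i) * b := by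
  rw [Nn, Finset.prod_range_succ', Nn, map_prod]
  congr 1
  exact Finset.prod_congr rfl fun j _ => Function.iterate_succ_apply' (⇑e) j b

/-- right remainder map: `t - b` right divides `P` iff this vanishes. -/
noncomputable def eps (b : F) (P : Polynomial F) : F := P.sum fun i a => a * Nn e b i

/-- left remainder map: `t - b` left divides `P` iff this vanishes. -/
noncomputable def lam (b : F) (P : Polynomial F) : F :=
  P.sum fun i a => (⇑e.symm)^[i] a * Mm e b i

lemma eps_def (b : F) (P : Polynomial F) :
    eps e b P = ∑ i ∈ P.support, P.coeff i * Nn e b i := Polynomial.sum_def _ _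

lemma lam_def (b : F) (P : Polynomial F) :
    lam e b P = ∑ i ∈ P.support, (⇑e.symm)^[i] (P.coeff i) * Mm e b i := Polynomial.sum_def _ _

/-- `eps` as an additive monoid hom in `P`. -/
noncomputable def epsHom (b : F) : Polynomial F →+ F where
  toFun := eps e b
  map_zero' := Polynomial.sum_zero_index _
  map_add' := fun P Q => Polynomial.sum_add_index P Q (fun i a => a * Nn e b i)
    (fun i => zero_mul _) (fun i x y => add_mul x y _)

/-- `lam` as an additive monoid hom in `P`. -/
noncomputable def lamHom (b : F) : Polynomial F →+ F where
  toFun := lam e b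
  map_zero' := Polynomial.sum_zero_index _
  map_add' := fun P Q => Polynomial.sum_add_index P Q
    (fun i a => (⇑e.symm)^[i] a * Mm e b i)
    (fun i => by rw [it_zero, zero_mul])
    (fun i x y => by rw [it_add, add_mul])

@[simp] lemma epsHom_apply (b : F) (P : Polynomial F) : epsHom e b P = eps e b P := rfl
@[simp] lemma lamHom_apply (b : F) (P : Polynomial F) : lamHom e b P = lam e b P := rfl

lemma eps_monomial (b : F) (k : ℕ) (x : F) :
    eps e b (Polynomial.monomial k x) = x * Nn e b k :=
  Polynomial.sum_monomial_index _ _ (zero_mul _)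

lemma lam_monomial (b : F) (k : ℕ) (x : F) :
    lam e b (Polynomial.monomial k x) = (⇑e.symm)^[k] x * Mm e b k :=
  Polynomial.sum_monomial_index _ _ (by rw [it_zero, zero_mul])

end Stmt6Aux

namespace Stmt6Aux

variable {F : Type*} [Field F] (e : F ≃+* F)

/-! ### skewMul lemmas -/

lemma skewMul_eq_sum (P Q : Polynomial F) {s t : Finset ℕ}
    (hs : P.support ⊆ s) (ht : Q.support ⊆ t) :
    skewMul (⇑e) P Q =
      ∑ i ∈ s, ∑ j ∈ t, Polynomial.C (P.coeff i * (⇑e)^[i] (Q.coeff j)) * X ^ (i + j) := by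
  rw [skewMul]
  rw [Finset.sum_subset hs (fun i _ hi => ?_)]
  · refine Finset.sum_congr rfl fun i _ => ?_
    refine Finset.sum_subset ht fun j _ hj => ?_
    rw [Polynomial.notMem_support_iff.mp hj, it_zero, mul_zero, map_zero, zero_mul]
  · refine Finset.sum_eq_zero fun j _ => ?_
    rw [Polynomial.notMem_support_iff.mp hi, zero_mul, map_zero, zero_mul]

lemma support_X_sub_C (b : F) : (X - Polynomial.C b).support ⊆ Finset.range 2 := by
  intro j hj
  rw [Finset.mem_range]
  by_contra h
  push_neg at h
  apply Polynomial.mem_support_iff.mp hj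
  rw [Polynomial.coeff_sub, Polynomial.coeff_X, Polynomial.coeff_C,
    if_neg (by omega), if_neg (by omega), sub_zero]

@[simp] lemma coeff_X_sub_C_zero (b : F) : (X - Polynomial.C b).coeff 0 = -b := by
  simp [Polynomial.coeff_sub]

@[simp] lemma coeff_X_sub_C_one (b : F) : (X - Polynomial.C b).coeff 1 = 1 := by
  simp [Polynomial.coeff_sub]

/-- `Q · (t - b)` expanded. -/
lemma skewMul_linear_right (b : F) (Q : Polynomial F) {n : ℕ} (hQ : Q.support ⊆ Finset.range n) :
    skewMul (⇑e) Q (X - Polynomial.C b) =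
      ∑ i ∈ Finset.range n,
        (Polynomial.monomial (i + 1) (Q.coeff i)
          - Polynomial.monomial i (Q.coeff i * (⇑e)^[i] b)) := by
  rw [skewMul_eq_sum e Q (X - Polynomial.C b) hQ (support_X_sub_C b)]
  refine Finset.sum_congr rfl fun i _ => ?_
  rw [Finset.sum_range_succ, Finset.sum_range_one]
  rw [coeff_X_sub_C_zero, coeff_X_sub_C_one, it_one, it_neg, mul_one, mul_neg, map_neg,
    neg_mul, Polynomial.C_mul_X_pow_eq_monomial (n := i + 0),
    Polynomial.C_mul_X_pow_eq_monomial (n := i + 1)]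
  rw [Nat.add_zero]
  ring

/-- `(t - b) · Q` expanded. -/
lemma skewMul_linear_left (b : F) (Q : Polynomial F) {n : ℕ} (hQ : Q.support ⊆ Finset.range n) :
    skewMul (⇑e) (X - Polynomial.C b) Q =
      ∑ j ∈ Finset.range n,
        (Polynomial.monomial (j + 1) (e (Q.coeff j))
          - Polynomial.monomial j (b * Q.coeff j)) := by
  rw [skewMul_eq_sum e (X - Polynomial.C b) Q (support_X_sub_C b) hQ,
    Finset.sum_range_succ, Finset.sum_range_one, Finset.sum_sub_distrib]
  have hA : ∀ j, Polynomial.C ((X - Polynomial.C b).coeff 1 * (⇑e)^[1] (Q.coeff j)) * X ^ (1 + j)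
      = Polynomial.monomial (j + 1) (e (Q.coeff j)) := fun j => by
    rw [coeff_X_sub_C_one, one_mul, Function.iterate_one,
      Polynomial.C_mul_X_pow_eq_monomial, Nat.add_comm 1 j]
  have hB : ∀ j, Polynomial.C ((X - Polynomial.C b).coeff 0 * (⇑e)^[0] (Q.coeff j)) * X ^ (0 + j)
      = -Polynomial.monomial j (b * Q.coeff j) := fun j => by
    rw [coeff_X_sub_C_zero, Function.iterate_zero, id_eq, neg_mul, map_neg, neg_mul,
      Polynomial.C_mul_X_pow_eq_monomial, Nat.zero_add]
  simp only [hA, hB, Finset.sum_neg_distrib]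
  abel

lemma skewMul_zero_right (P : Polynomial F) : skewMul (⇑e) P 0 = 0 := by
  simp [skewMul]

lemma skewMul_zero_left (P : Polynomial F) : skewMul (⇑e) 0 P = 0 := by
  simp [skewMul]

lemma skewMul_add_right (P Q Q' : Polynomial F) :
    skewMul (⇑e) P (Q + Q') = skewMul (⇑e) P Q + skewMul (⇑e) P Q' := by
  set t : Finset ℕ := Q.support ∪ Q'.support ∪ (Q + Q').support with ht
  have h1 : Q.support ⊆ t := fun j hj => by simp [ht, hj]
  have h2 : Q'.support ⊆ t := fun j hj => by simp [ht, hj]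
  have h3 : (Q + Q').support ⊆ t := fun j hj => by simp [ht, hj]
  rw [skewMul_eq_sum e P Q (Finset.Subset.refl _) h1,
    skewMul_eq_sum e P Q' (Finset.Subset.refl _) h2,
    skewMul_eq_sum e P (Q + Q') (Finset.Subset.refl _) h3,
    ← Finset.sum_add_distrib]
  refine Finset.sum_congr rfl fun i _ => ?_
  rw [← Finset.sum_add_distrib]
  refine Finset.sum_congr rfl fun j _ => ?_
  rw [Polynomial.coeff_add, it_add, mul_add, map_add, add_mul]

lemma skewMul_add_left (P P' Q : Polynomial F) :
    skewMul (⇑e) (P + P') Q = skewMul (⇑e) P Q + skewMul (⇑e) P' Q := by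
  set t : Finset ℕ := P.support ∪ P'.support ∪ (P + P').support with ht
  have h1 : P.support ⊆ t := fun j hj => by simp [ht, hj]
  have h2 : P'.support ⊆ t := fun j hj => by simp [ht, hj]
  have h3 : (P + P').support ⊆ t := fun j hj => by simp [ht, hj]
  rw [skewMul_eq_sum e P Q h1 (Finset.Subset.refl _),
    skewMul_eq_sum e P' Q h2 (Finset.Subset.refl _),
    skewMul_eq_sum e (P + P') Q h3 (Finset.Subset.refl _),
    ← Finset.sum_add_distrib]
  refine Finset.sum_congr rfl fun i _ => ?_
  rw [← Finset.sum_add_distrib]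
  refine Finset.sum_congr rfl fun j _ => ?_
  rw [Polynomial.coeff_add, add_mul, map_add, add_mul]

end Stmt6Aux

namespace Stmt6Aux

variable {F : Type*} [Field F] (e : F ≃+* F)

/-! ### remainder of skew products by linear factors -/

lemma eps_skewMul_right (b : F) (Q : Polynomial F) :
    eps e b (skewMul (⇑e) Q (X - Polynomial.C b)) = 0 := by
  rw [← epsHom_apply, skewMul_linear_right e b Q Q.supp_subset_range_natDegree_succ,
    map_sum]
  refine Finset.sum_eq_zero fun i _ => ?_
  rw [AddMonoidHom.map_sub, epsHom_apply, epsHom_apply, eps_monomial, eps_monomial,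
    Nn_succ]
  ring

lemma lam_skewMul_left (b : F) (Q : Polynomial F) :
    lam e b (skewMul (⇑e) (X - Polynomial.C b) Q) = 0 := by
  rw [← lamHom_apply, skewMul_linear_left e b Q Q.supp_subset_range_natDegree_succ,
    map_sum]
  refine Finset.sum_eq_zero fun j _ => ?_
  rw [AddMonoidHom.map_sub, lamHom_apply, lamHom_apply, lam_monomial, lam_monomial,
    Mm_succ, Function.iterate_succ_apply, RingEquiv.symm_apply_apply, it_mul]
  ring

end Stmt6Aux

namespace Stmt6Aux

variable {F : Type*} [Field F] (e : F ≃+* F)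

lemma lam_C (b a : F) : lam e b (Polynomial.C a) = a := by
  rw [← Polynomial.monomial_zero_left, lam_monomial]
  simp [Mm_zero]

lemma eps_C (b a : F) : eps e b (Polynomial.C a) = a := by
  rw [← Polynomial.monomial_zero_left, eps_monomial]
  simp [Nn_zero]

lemma monomial_collapse_left (b c : F) {d : ℕ} (hd : 1 ≤ d) :
    skewMul (⇑e) (X - Polynomial.C b) (Polynomial.monomial (d - 1) c) =
      Polynomial.monomial d (e c) - Polynomial.monomial (d - 1) (b * c) := by
  have hsupp : (Polynomial.monomial (d - 1) c).support ⊆ Finset.range d := by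
    intro j hj
    have := Polynomial.support_monomial' (d - 1) c hj
    rw [Finset.mem_singleton] at this
    rw [this, Finset.mem_range]; omega
  rw [skewMul_linear_left e b _ hsupp,
    Finset.sum_eq_single (d - 1) (fun j _ hj => by
      rw [Polynomial.coeff_monomial, if_neg (fun h => hj h.symm)]
      simp) (fun h => absurd (Finset.mem_range.mpr (by omega)) h)]
  rw [Polynomial.coeff_monomial, if_pos rfl, Nat.sub_add_cancel hd]

lemma monomial_collapse_right (b c : F) {d : ℕ} (hd : 1 ≤ d) :
    skewMul (⇑e) (Polynomial.monomial (d - 1) c) (X - Polynomial.C b) =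
      Polynomial.monomial d c - Polynomial.monomial (d - 1) (c * (⇑e)^[d - 1] b) := by
  have hsupp : (Polynomial.monomial (d - 1) c).support ⊆ Finset.range d := by
    intro j hj
    have := Polynomial.support_monomial' (d - 1) c hj
    rw [Finset.mem_singleton] at this
    rw [this, Finset.mem_range]; omega
  rw [skewMul_linear_right e b _ hsupp,
    Finset.sum_eq_single (d - 1) (fun j _ hj => by
      rw [Polynomial.coeff_monomial, if_neg (fun h => hj h.symm)]
      simp) (fun h => absurd (Finset.mem_range.mpr (by omega)) h)]
  rw [Polynomial.coeff_monomial, if_pos rfl, Nat.sub_add_cancel hd]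

/-- left division: if the left remainder vanishes, `t - b` left divides `P`. -/
lemma exists_left_of_lam (b : F) :
    ∀ n (P : Polynomial F), P.natDegree < n → lam e b P = 0 →
      ∃ Q, P = skewMul (⇑e) (X - Polynomial.C b) Q := by
  intro n
  induction n with
  | zero => exact fun P h => absurd h (Nat.not_lt_zero _)
  | succ n ih =>
    intro P hdeg hlam
    by_cases hP0 : P = 0
    · exact ⟨0, by rw [hP0, skewMul_zero_right]⟩
    by_cases hd0 : P.natDegree = 0
    · obtain ⟨a, rfl⟩ := Polynomial.natDegree_eq_zero.mp hd0
      rw [lam_C] at hlam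
      exact absurd (by rw [hlam, Polynomial.C_0]) hP0
    · set d := P.natDegree with hd
      have hd1 : 1 ≤ d := by omega
      set c := e.symm (P.coeff d) with hc
      set A := skewMul (⇑e) (X - Polynomial.C b) (Polynomial.monomial (d - 1) c) with hAdef
      have hA : A = Polynomial.monomial d (P.coeff d) - Polynomial.monomial (d - 1) (b * c) := by
        rw [hAdef, monomial_collapse_left e b c hd1, e.apply_symm_apply]
      by_cases hPA : P - A = 0
      · exact ⟨Polynomial.monomial (d - 1) c, by
          have : P = A := by rwa [sub_eq_zero] at hPA
          rw [this, hAdef]⟩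
      have hcoeff : ∀ m, d ≤ m → (P - A).coeff m = 0 := by
        intro m hm
        rw [Polynomial.coeff_sub, hA, Polynomial.coeff_sub, Polynomial.coeff_monomial,
          Polynomial.coeff_monomial]
        rcases eq_or_lt_of_le hm with h | h
        · rw [if_pos h, if_neg (by omega), ← h]
          simp
        · rw [if_neg (by omega), if_neg (by omega),
            Polynomial.coeff_eq_zero_of_natDegree_lt (by omega)]
          simp
      have hdlt : (P - A).natDegree < d := by
        rw [Polynomial.natDegree_lt_iff_degree_lt hPA]
        exact (Polynomial.degree_lt_iff_coeff_zero _ _).mpr fun m hm =>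
          hcoeff m (by exact_mod_cast hm)
      have hlam' : lam e b (P - A) = 0 := by
        rw [← lamHom_apply, AddMonoidHom.map_sub, lamHom_apply, lamHom_apply, hlam, hAdef,
          lam_skewMul_left, sub_zero]
      obtain ⟨Q', hQ'⟩ := ih (P - A) (by omega) hlam'
      refine ⟨Polynomial.monomial (d - 1) c + Q', ?_⟩
      rw [skewMul_add_right, ← hAdef, ← hQ']
      ring

/-- right division: if the right remainder vanishes, `t - b` right divides `P`. -/
lemma exists_right_of_eps (b : F) :
    ∀ n (P : Polynomial F), P.natDegree < n → eps e b P = 0 →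
      ∃ Q, P = skewMul (⇑e) Q (X - Polynomial.C b) := by
  intro n
  induction n with
  | zero => exact fun P h => absurd h (Nat.not_lt_zero _)
  | succ n ih =>
    intro P hdeg heps
    by_cases hP0 : P = 0
    · exact ⟨0, by rw [hP0, skewMul_zero_left]⟩
    by_cases hd0 : P.natDegree = 0
    · obtain ⟨a, rfl⟩ := Polynomial.natDegree_eq_zero.mp hd0
      rw [eps_C] at heps
      exact absurd (by rw [heps, Polynomial.C_0]) hP0
    · set d := P.natDegree with hd
      have hd1 : 1 ≤ d := by omega
      set c := P.coeff d with hc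
      set A := skewMul (⇑e) (Polynomial.monomial (d - 1) c) (X - Polynomial.C b) with hAdef
      have hA : A = Polynomial.monomial d c - Polynomial.monomial (d - 1) (c * (⇑e)^[d - 1] b) := by
        rw [hAdef, monomial_collapse_right e b c hd1]
      by_cases hPA : P - A = 0
      · exact ⟨Polynomial.monomial (d - 1) c, by
          have : P = A := by rwa [sub_eq_zero] at hPA
          rw [this, hAdef]⟩
      have hcoeff : ∀ m, d ≤ m → (P - A).coeff m = 0 := by
        intro m hm
        rw [Polynomial.coeff_sub, hA, Polynomial.coeff_sub, Polynomial.coeff_monomial,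
          Polynomial.coeff_monomial]
        rcases eq_or_lt_of_le hm with h | h
        · rw [if_pos h, if_neg (by omega), ← h]
          simp [hc]
        · rw [if_neg (by omega), if_neg (by omega),
            Polynomial.coeff_eq_zero_of_natDegree_lt (by omega)]
          simp
      have hdlt : (P - A).natDegree < d := by
        rw [Polynomial.natDegree_lt_iff_degree_lt hPA]
        exact (Polynomial.degree_lt_iff_coeff_zero _ _).mpr fun m hm =>
          hcoeff m (by exact_mod_cast hm)
      have heps' : eps e b (P - A) = 0 := by
        rw [← epsHom_apply, AddMonoidHom.map_sub, epsHom_apply, epsHom_apply, heps, hAdef,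
          eps_skewMul_right, sub_zero]
      obtain ⟨Q', hQ'⟩ := ih (P - A) (by omega) heps'
      refine ⟨Polynomial.monomial (d - 1) c + Q', ?_⟩
      rw [skewMul_add_left, ← hAdef, ← hQ']
      ring

end Stmt6Aux

namespace Stmt6Aux

variable {F : Type*} [Field F] [Fintype F]

instance : Finite (RingAut F) :=
  Finite.of_injective (fun g => (g : F → F)) DFunLike.coe_injective

variable (e : F ≃+* F)

/-- order of the automorphism in `RingAut F`. -/
noncomputable def em : ℕ := orderOf (e : RingAut F)

lemma em_pos : 0 < em e := orderOf_pos (e : RingAut F)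

lemma pow_apply (j : ℕ) : ∀ x : F, ((e : RingAut F) ^ j) x = (⇑e)^[j] x := by
  induction j with
  | zero => exact fun x => rfl
  | succ j ih =>
    intro x
    rw [pow_succ, Function.iterate_succ_apply]
    exact ih (e x)

end Stmt6Aux

namespace Stmt6Aux

variable {F : Type*} [Field F] [Fintype F] (e : F ≃+* F)

lemma it_em (x : F) : (⇑e)^[em e] x = x := by
  rw [← pow_apply]
  have h : (e : RingAut F) ^ em e = 1 := pow_orderOf_eq_one _
  rw [h]
  rfl

/-- trace-like map: sum of the orbit of `z` under powers of `e`. -/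
noncomputable def tr (z : F) : F := ∑ j ∈ Finset.range (em e), (⇑e)^[j] z

lemma tr_apply_e (z : F) : tr e (e z) = tr e z := by
  have h1 : ∑ j ∈ Finset.range (em e), (⇑e)^[j] (e z)
      = ∑ j ∈ Finset.range (em e), (⇑e)^[j + 1] z :=
    Finset.sum_congr rfl fun j _ => (Function.iterate_succ_apply (⇑e) j z).symm
  have h2 : ∑ j ∈ Finset.range (em e + 1), (⇑e)^[j] z
      = ∑ j ∈ Finset.range (em e), (⇑e)^[j + 1] z + z :=
    Finset.sum_range_succ' _ _
  have h3 : ∑ j ∈ Finset.range (em e + 1), (⇑e)^[j] z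
      = ∑ j ∈ Finset.range (em e), (⇑e)^[j] z + z := by
    rw [Finset.sum_range_succ, it_em]
  rw [tr, h1, tr]
  exact add_right_cancel (h2.symm.trans h3)

lemma tr_apply_it (i : ℕ) (z : F) : tr e ((⇑e)^[i] z) = tr e z := by
  induction i with
  | zero => rfl
  | succ i ih => rw [Function.iterate_succ_apply', tr_apply_e, ih]

lemma tr_apply_symm_it (i : ℕ) (z : F) : tr e ((⇑e.symm)^[i] z) = tr e z := by
  conv_rhs => rw [← it_symm_cancel e i z]
  rw [tr_apply_it]

/-- `tr` as an additive monoid hom. -/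
noncomputable def trHom : F →+ F where
  toFun := tr e
  map_zero' := by simp [tr, it_zero]
  map_add' := fun x y => by
    simp only [tr, it_add, Finset.sum_add_distrib]

@[simp] lemma trHom_apply (z : F) : trHom e z = tr e z := rfl

/-- the trace-like map is nonzero (Dedekind independence of characters). -/
lemma tr_ne_zero : ∃ z : F, tr e z ≠ 0 := by
  by_contra hc
  push_neg at hc
  set m := em e with hm
  have hmpos : 0 < m := em_pos e
  -- the family of monoid homs
  set h : Fin m → (F →* F) := fun j => ((((e : RingAut F) ^ (j : ℕ)) : F ≃+* F) : F →+* F).toMonoidHom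
    with hh
  have hinj : Function.Injective h := by
    intro j k hjk
    have : ((e : RingAut F) ^ (j : ℕ)) = ((e : RingAut F) ^ (k : ℕ)) := by
      apply DFunLike.ext
      intro x
      exact DFunLike.congr_fun hjk x
    have := pow_injOn_Iio_orderOf (x := (e : RingAut F))
      (Set.mem_Iio.mpr j.isLt) (Set.mem_Iio.mpr k.isLt) this
    exact Fin.ext this
  have hli : LinearIndependent F (fun j : Fin m => ((h j : F → F))) :=
    (linearIndependent_monoidHom F F).comp h hinj
  have hsum : ∑ j : Fin m, (1 : F) • ((h j : F → F)) = 0 := by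
    funext z
    have : ∑ j : Fin m, (h j) z = ∑ j ∈ Finset.range m, (⇑e)^[j] z := by
      rw [Finset.sum_range fun j => (⇑e)^[j] z]
      exact Finset.sum_congr rfl fun j _ => pow_apply e (j : ℕ) z
    simpa [this, tr, ← hm] using hc z
  have := Fintype.linearIndependent_iff.mp hli (fun _ => (1 : F)) hsum
  exact one_ne_zero (this ⟨0, hmpos⟩)

end Stmt6Aux

namespace Stmt6Aux

variable {F : Type*} [Field F] [Fintype F]

/-- the adjoint lemma: if the twisted-linear-combination map kills a nonzero
vector, then its trace-adjoint kills a nonzero vector. -/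
lemma adj (e : F ≃+* F) (s : Finset ℕ) (w : ℕ → F) {y₀ : F} (hy : y₀ ≠ 0)
    (h : ∑ i ∈ s, w i * (⇑e)^[i] y₀ = 0) :
    ∃ u : F, u ≠ 0 ∧ ∑ i ∈ s, (⇑e.symm)^[i] (w i * u) = 0 := by
  by_contra hc
  push_neg at hc
  set Φ : F →+ F := AddMonoidHom.mk' (fun u => ∑ i ∈ s, (⇑e.symm)^[i] (w i * u))
    (fun u v => by simp only [mul_add, it_add, Finset.sum_add_distrib]) with hΦ
  have hΦapp : ∀ u, Φ u = ∑ i ∈ s, (⇑e.symm)^[i] (w i * u) := fun u => rfl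
  have hΦinj : Function.Injective Φ := by
    intro u v huv
    by_contra hne
    have h0 : Φ (u - v) = 0 := by rw [map_sub, huv, sub_self]
    exact hc (u - v) (sub_ne_zero.mpr hne) (by rw [← hΦapp, h0])
  have hΦsurj : Function.Surjective Φ := Finite.surjective_of_injective hΦinj
  have key : ∀ u, tr e (Φ u * y₀) = 0 := by
    intro u
    have expand : Φ u * y₀ = ∑ i ∈ s, (⇑e.symm)^[i] (w i * u) * y₀ := by
      rw [hΦapp, Finset.sum_mul]
    rw [expand, ← trHom_apply, map_sum]
    have termwise : ∀ i ∈ s, trHom e ((⇑e.symm)^[i] (w i * u) * y₀)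
        = tr e (w i * u * (⇑e)^[i] y₀) := by
      intro i _
      rw [trHom_apply, ← tr_apply_it e i ((⇑e.symm)^[i] (w i * u) * y₀), it_mul,
        it_symm_cancel]
    rw [Finset.sum_congr rfl termwise]
    have h1 : ∑ i ∈ s, tr e (w i * u * (⇑e)^[i] y₀)
        = tr e (∑ i ∈ s, w i * u * (⇑e)^[i] y₀) := (map_sum (trHom e) _ s).symm
    have h2 : ∑ i ∈ s, w i * u * (⇑e)^[i] y₀ = u * ∑ i ∈ s, w i * (⇑e)^[i] y₀ := by
      rw [Finset.mul_sum]
      exact Finset.sum_congr rfl fun i _ => by ring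
    rw [h1, h2, h, mul_zero, ← trHom_apply, map_zero]
  obtain ⟨z, hz⟩ := tr_ne_zero e
  obtain ⟨u, hu⟩ := hΦsurj (z * y₀⁻¹)
  apply hz
  have hk := key u
  rw [hu, mul_assoc, inv_mul_cancel₀ hy, mul_one] at hk
  exact hk

end Stmt6Aux

namespace Stmt6Aux

variable {F : Type*} [Field F] (e : F ≃+* F)

lemma I1 (b u : F) (hu : u ≠ 0) : ∀ i : ℕ,
    Mm e (e.symm b * e.symm u * u⁻¹) i * u = (⇑e.symm)^[i] (Nn e b i * u) := by
  intro i
  induction i with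
  | zero => simp
  | succ i ih =>
    have hiu : (⇑e.symm)^[i] u ≠ 0 := fun h0 => hu ((it_eq_zero_iff e.symm i u).mp h0)
    have hb' : (⇑e.symm)^[i] (e.symm b * e.symm u * u⁻¹)
        = (⇑e.symm)^[i + 1] b * (⇑e.symm)^[i + 1] u * ((⇑e.symm)^[i] u)⁻¹ := by
      rw [it_mul, it_mul, it_inv, ← Function.iterate_succ_apply, ← Function.iterate_succ_apply]
    have hrhs : (⇑e.symm)^[i + 1] (Nn e b (i + 1) * u)
        = (⇑e.symm)^[i] (Nn e b i) * (⇑e.symm)^[i + 1] b * (⇑e.symm)^[i + 1] u := by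
      rw [Nn_succ', it_mul, it_mul, Function.iterate_succ_apply (⇑e.symm) i (e (Nn e b i)),
        RingEquiv.symm_apply_apply]
    have hlhs : (⇑e.symm)^[i] (Nn e b i * u)
        = (⇑e.symm)^[i] (Nn e b i) * (⇑e.symm)^[i] u := it_mul _ _ _ _
    rw [Mm_succ, hrhs, mul_right_comm, ih, hlhs, hb']
    field_simp

lemma I2 (b : F) : ∀ i : ℕ, Mm e b i = (⇑e.symm)^[i] (Nn e (e b) i) := by
  intro i
  induction i with
  | zero => simp
  | succ i ih =>
    rw [Mm_succ, Nn_succ', it_mul, Function.iterate_succ_apply (⇑e.symm) i (e (Nn e (e b) i)),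
      RingEquiv.symm_apply_apply, Function.iterate_succ_apply (⇑e.symm) i (e b),
      RingEquiv.symm_apply_apply, ih]

lemma I3 (c x : F) (hx : x ≠ 0) : ∀ i : ℕ,
    Nn e (c * e x * x⁻¹) i * x = Nn e c i * (⇑e)^[i] x := by
  intro i
  induction i with
  | zero => simp
  | succ i ih =>
    have hix : (⇑e)^[i] x ≠ 0 := fun h0 => hx ((it_eq_zero_iff e i x).mp h0)
    have hb'' : (⇑e)^[i] (c * e x * x⁻¹)
        = (⇑e)^[i] c * (⇑e)^[i + 1] x * ((⇑e)^[i] x)⁻¹ := by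
      rw [it_mul, it_mul, it_inv, ← Function.iterate_succ_apply]
    rw [Nn_succ, Nn_succ, mul_right_comm, ih, hb'']
    field_simp

end Stmt6Aux

namespace Stmt6Aux

variable {F : Type*} [Field F] [Fintype F] (e : F ≃+* F)

/-- a polynomial with a linear right divisor has a linear left divisor. -/
lemma key_rl (P R : Polynomial F) (b : F) (hP : P = skewMul (⇑e) R (X - Polynomial.C b)) :
    ∃ Q b', P = skewMul (⇑e) (X - Polynomial.C b') Q := by
  have heps : eps e b P = 0 := by rw [hP]; exact eps_skewMul_right e b R
  have h1 : ∑ i ∈ P.support, (P.coeff i * Nn e b i) * (⇑e)^[i] (1 : F) = 0 := by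
    rw [← heps, eps_def]
    exact Finset.sum_congr rfl fun i _ => by rw [it_one, mul_one]
  obtain ⟨u, hu0, hu⟩ := adj e P.support (fun i => P.coeff i * Nn e b i) one_ne_zero h1
  set b' := e.symm b * e.symm u * u⁻¹ with hb'
  have hlam : lam e b' P = 0 := by
    rw [lam_def]
    have hterm : ∀ i ∈ P.support, (⇑e.symm)^[i] (P.coeff i) * Mm e b' i
        = (⇑e.symm)^[i] (P.coeff i * Nn e b i * u) * u⁻¹ := by
      intro i _
      have hI := I1 e b u hu0 i
      have hM : Mm e b' i = (⇑e.symm)^[i] (Nn e b i * u) * u⁻¹ := by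
        rw [← hI, mul_assoc, mul_inv_cancel₀ hu0, mul_one]
      rw [hM, it_mul e.symm i (P.coeff i * Nn e b i) u, it_mul e.symm i (P.coeff i) (Nn e b i),
        it_mul e.symm i (Nn e b i) u]
      ring
    rw [Finset.sum_congr rfl hterm, ← Finset.sum_mul, hu, zero_mul]
  obtain ⟨Q, hQ⟩ := exists_left_of_lam e b' (P.natDegree + 1) P (Nat.lt_succ_self _) hlam
  exact ⟨Q, b', hQ⟩

/-- a polynomial with a linear left divisor has a linear right divisor. -/
lemma key_lr (P R : Polynomial F) (b : F) (hP : P = skewMul (⇑e) (X - Polynomial.C b) R) :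
    ∃ Q b'', P = skewMul (⇑e) Q (X - Polynomial.C b'') := by
  have hlam : lam e b P = 0 := by rw [hP]; exact lam_skewMul_left e b R
  have h1 : ∑ i ∈ P.support,
      ((⇑e.symm)^[i] (P.coeff i * Nn e (e b) i)) * (⇑e.symm)^[i] (1 : F) = 0 := by
    rw [← hlam, lam_def]
    refine Finset.sum_congr rfl fun i _ => ?_
    rw [it_one, mul_one, it_mul, ← I2]
  obtain ⟨x, hx0, hx⟩ := adj e.symm P.support
    (fun i => (⇑e.symm)^[i] (P.coeff i * Nn e (e b) i)) one_ne_zero h1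
  rw [RingEquiv.symm_symm] at hx
  have hx' : ∑ i ∈ P.support, P.coeff i * Nn e (e b) i * (⇑e)^[i] x = 0 := by
    rw [← hx]
    refine Finset.sum_congr rfl fun i _ => ?_
    rw [it_mul e i ((⇑e.symm)^[i] (P.coeff i * Nn e (e b) i)) x, it_symm_cancel]
  set b'' := e b * e x * x⁻¹ with hb''
  have heps : eps e b'' P = 0 := by
    rw [eps_def]
    have hterm : ∀ i ∈ P.support, P.coeff i * Nn e b'' i
        = (P.coeff i * Nn e (e b) i * (⇑e)^[i] x) * x⁻¹ := by
      intro i _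
      have hI := I3 e (e b) x hx0 i
      have hN : Nn e b'' i = Nn e (e b) i * (⇑e)^[i] x * x⁻¹ := by
        rw [← hI, mul_assoc, mul_inv_cancel₀ hx0, mul_one]
      rw [hN]
      ring
    rw [Finset.sum_congr rfl hterm, ← Finset.sum_mul, hx', zero_mul]
  obtain ⟨Q, hQ⟩ := exists_right_of_eps e b'' (P.natDegree + 1) P (Nat.lt_succ_self _) heps
  exact ⟨Q, b'', hQ⟩

end Stmt6Aux

/-- a twisted polynomial over a finite field has a linear right
divisor iff it has a linear left divisor. -/
theorem stmt6 {F : Type*} [Field F] [Fintype F] (σ : F →+* F)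
    (hσ : Function.Bijective σ) (P : Polynomial F) :
    (∃ (R : Polynomial F) (b : F), P = skewMul (⇑σ) R (X - C b)) ↔
    (∃ (R : Polynomial F) (b : F), P = skewMul (⇑σ) (X - C b) R) := by
  set e : F ≃+* F := RingEquiv.ofBijective σ hσ with he
  have hcoe : ⇑σ = ⇑e := rfl
  constructor
  · rintro ⟨R, b, hP⟩
    rw [hcoe] at hP ⊢
    obtain ⟨Q, b', hQ⟩ := Stmt6Aux.key_rl e P R b hP
    exact ⟨Q, b', hQ⟩
  · rintro ⟨R, b, hP⟩
    rw [hcoe] at hP ⊢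
    obtain ⟨Q, b'', hQ⟩ := Stmt6Aux.key_lr e P R b hP
    exact ⟨Q, b'', hQ⟩
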